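/- Let (c_i)_{i=1}^K be a non-increasing sequence of positive reals and (λ_i)_{i=1}^n positive reals (K ≥ n) such that (c_1,…,c_K) is majorized by (λ_1,…,λ_n,0,…,0). Then there exists a K×K orthogonal matrix X such that the diagonal entries of X^⊤ diag(λ_1,…,λ_n,0,…,0) X are exactly (c_1,…,c_K). -/

import Mathlib

open Finset Matrix


def rotM {K : ℕ} (p t : Fin K) (co s : ℝ) : Matrix (Fin K) (Fin K) ℝ := fun x u =>
  if x = p then (if u = p then co else if u = t then -s else 0)
  else if x = t then (if u = p then s else if u = t then co else 0)
  else if x = u then 1 else 0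

lemma sum_split_two {K : ℕ} (p t : Fin K) (hpt : p ≠ t) (g : Fin K → ℝ) :
    ∑ x, g x = g p + g t + ∑ x ∈ (univ.erase p).erase t, g x := by
  have h1 : t ∈ univ.erase p := by simp [Ne.symm, hpt]
  have h2 : p ∈ (univ : Finset (Fin K)) := mem_univ p
  rw [← Finset.add_sum_erase _ g h2, ← Finset.add_sum_erase _ g h1, add_assoc]

lemma rot_orth {K : ℕ} (p t : Fin K) (hpt : p ≠ t) (co s : ℝ) (h1 : co^2 + s^2 = 1) :
    (rotM p t co s)ᵀ * rotM p t co s = 1 := by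
  ext i j
  rw [Matrix.mul_apply]
  simp only [transpose_apply]
  rw [sum_split_two p t hpt]
  have hpt2 : ¬ t = p := fun h => hpt h.symm
  have hrest : ∑ x ∈ (univ.erase p).erase t, rotM p t co s x i * rotM p t co s x j
      = if i = j then (if i = p ∨ i = t then 0 else 1) else 0 := by
    have step : ∀ x ∈ (univ.erase p).erase t, rotM p t co s x i * rotM p t co s x j
        = if x = i then (if i = j then (1:ℝ) else 0) else 0 := by
      intro x hx
      simp only [Finset.mem_erase] at hx
      simp only [rotM, if_neg hx.2.1, if_neg hx.1]
      by_cases hxi : x = i <;> by_cases hxj : x = j <;> simp_all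
    rw [Finset.sum_congr rfl step, Finset.sum_ite_eq']
    by_cases hij : i = j <;> by_cases hip : i = p <;> by_cases hit : i = t <;>
      simp_all [Finset.mem_erase]
  rw [hrest]
  simp only [rotM, Matrix.one_apply]
  by_cases hip : i = p <;> by_cases hit : i = t <;> by_cases hjp : j = p <;>
    by_cases hjt : j = t <;> by_cases hij : i = j <;> simp_all [hpt2] <;> nlinarith [h1]

lemma rot_conj {K : ℕ} (p t : Fin K) (hpt : p ≠ t) (co s : ℝ) (d : Fin K → ℝ) (u v : Fin K) :
    ((rotM p t co s)ᵀ * diagonal d * rotM p t co s) u v =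
      d p * (rotM p t co s p u * rotM p t co s p v)
      + d t * (rotM p t co s t u * rotM p t co s t v)
      + (if u = v then (if u = p ∨ u = t then 0 else d u) else 0) := by
  rw [Matrix.mul_apply]
  have hterm : ∀ y, ((rotM p t co s)ᵀ * diagonal d) u y * rotM p t co s y v
      = d y * (rotM p t co s y u * rotM p t co s y v) := by
    intro y
    rw [Matrix.mul_diagonal, transpose_apply]
    ring
  rw [Finset.sum_congr rfl (fun y _ => hterm y)]
  rw [sum_split_two p t hpt]
  congr 1
  have step : ∀ y ∈ (univ.erase p).erase t,
      d y * (rotM p t co s y u * rotM p t co s y v)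
      = if y = u then (if u = v then d u else 0) else 0 := by
    intro y hy
    simp only [Finset.mem_erase] at hy
    simp only [rotM, if_neg hy.2.1, if_neg hy.1]
    by_cases hyu : y = u <;> by_cases hyv : y = v <;> simp_all
  rw [Finset.sum_congr rfl step, Finset.sum_ite_eq']
  by_cases huv : u = v <;> by_cases hup : u = p <;> by_cases hut : u = t <;>
    simp_all [Finset.mem_erase]

def blkg {m : ℕ} (Y : Matrix (Fin m) (Fin m) ℝ) : Option (Fin m) → Option (Fin m) → ℝ
  | none, none => 1
  | none, some _ => 0
  | some _, none => 0
  | some i, some j => Y i j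

def blk {m : ℕ} (p : Fin (m+1)) (Y : Matrix (Fin m) (Fin m) ℝ) :
    Matrix (Fin (m+1)) (Fin (m+1)) ℝ :=
  fun u v => blkg Y (finSuccEquiv' p u) (finSuccEquiv' p v)

lemma blk_pp {m : ℕ} (p : Fin (m+1)) (Y : Matrix (Fin m) (Fin m) ℝ) : blk p Y p p = 1 := by
  simp [blk, finSuccEquiv'_at, blkg]

lemma blk_p_sA {m : ℕ} (p : Fin (m+1)) (Y : Matrix (Fin m) (Fin m) ℝ) (i : Fin m) :
    blk p Y p (p.succAbove i) = 0 := by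
  simp [blk, finSuccEquiv'_at, finSuccEquiv'_succAbove, blkg]

lemma blk_sA_p {m : ℕ} (p : Fin (m+1)) (Y : Matrix (Fin m) (Fin m) ℝ) (i : Fin m) :
    blk p Y (p.succAbove i) p = 0 := by
  simp [blk, finSuccEquiv'_at, finSuccEquiv'_succAbove, blkg]

lemma blk_sA_sA {m : ℕ} (p : Fin (m+1)) (Y : Matrix (Fin m) (Fin m) ℝ) (i j : Fin m) :
    blk p Y (p.succAbove i) (p.succAbove j) = Y i j := by
  simp [blk, finSuccEquiv'_succAbove, blkg]

lemma blk_xp {m : ℕ} (p : Fin (m+1)) (Y : Matrix (Fin m) (Fin m) ℝ) (x : Fin (m+1)) :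
    blk p Y x p = if x = p then 1 else 0 := by
  by_cases hx : x = p
  · simp [hx, blk_pp]
  · obtain ⟨i, rfl⟩ := Fin.exists_succAbove_eq hx
    simp [hx, blk_sA_p]

lemma blk_orth {m : ℕ} (p : Fin (m+1)) (Y : Matrix (Fin m) (Fin m) ℝ) (hY : Yᵀ * Y = 1) :
    (blk p Y)ᵀ * blk p Y = 1 := by
  ext u v
  rw [Matrix.mul_apply]
  simp only [transpose_apply]
  rw [Fin.sum_univ_succAbove _ p]
  by_cases hu : u = p <;> by_cases hv : v = p
  · subst hu; subst hv
    simp [blk_pp, blk_sA_p, Matrix.one_apply]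
  · subst hu
    obtain ⟨j, rfl⟩ := Fin.exists_succAbove_eq hv
    simp [blk_pp, blk_p_sA, blk_sA_p, blk_sA_sA, Matrix.one_apply]
  · subst hv
    obtain ⟨i, rfl⟩ := Fin.exists_succAbove_eq hu
    simp [blk_pp, blk_p_sA, blk_sA_p, blk_sA_sA, Matrix.one_apply]
  · obtain ⟨i, rfl⟩ := Fin.exists_succAbove_eq hu
    obtain ⟨j, rfl⟩ := Fin.exists_succAbove_eq hv
    have h1 : ∀ x : Fin m, blk p Y (p.succAbove x) (p.succAbove i)
        * blk p Y (p.succAbove x) (p.succAbove j) = Y x i * Y x j := by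
      intro x; rw [blk_sA_sA, blk_sA_sA]
    rw [blk_p_sA, Finset.sum_congr rfl (fun x _ => h1 x)]
    have h2 : (Yᵀ * Y) i j = ∑ x, Y x i * Y x j := by
      rw [Matrix.mul_apply]; simp [transpose_apply]
    rw [zero_mul, zero_add, ← h2, hY, Matrix.one_apply, Matrix.one_apply]
    simp [Fin.succAbove_right_injective.eq_iff]

lemma blk_conj_p {m : ℕ} (p : Fin (m+1)) (Y : Matrix (Fin m) (Fin m) ℝ)
    (M : Matrix (Fin (m+1)) (Fin (m+1)) ℝ) :
    ((blk p Y)ᵀ * M * blk p Y) p p = M p p := by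
  rw [Matrix.mul_apply]
  have h1 : ∀ y, ((blk p Y)ᵀ * M) p y * blk p Y y p
      = if y = p then ((blk p Y)ᵀ * M) p y else 0 := by
    intro y; rw [blk_xp]; by_cases hy : y = p <;> simp [hy]
  rw [Finset.sum_congr rfl (fun y _ => h1 y), Finset.sum_ite_eq']
  simp only [mem_univ, if_true, Matrix.mul_apply, transpose_apply]
  have h2 : ∀ x, blk p Y x p * M x p = if x = p then M x p else 0 := by
    intro x; rw [blk_xp]; by_cases hx : x = p <;> simp [hx]
  rw [Finset.sum_congr rfl (fun x _ => h2 x), Finset.sum_ite_eq']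
  simp

lemma blk_conj_sA {m : ℕ} (p : Fin (m+1)) (Y : Matrix (Fin m) (Fin m) ℝ)
    (M : Matrix (Fin (m+1)) (Fin (m+1)) ℝ) (D' : Matrix (Fin m) (Fin m) ℝ)
    (hM : ∀ i j, M (p.succAbove i) (p.succAbove j) = D' i j) (i j : Fin m) :
    ((blk p Y)ᵀ * M * blk p Y) (p.succAbove i) (p.succAbove j) = (Yᵀ * D' * Y) i j := by
  have hMb : ∀ x : Fin m, (M * blk p Y) (p.succAbove x) (p.succAbove j)
      = (D' * Y) x j := by
    intro x
    rw [Matrix.mul_apply, Fin.sum_univ_succAbove _ p, blk_p_sA, mul_zero, zero_add,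
      Matrix.mul_apply]
    exact Finset.sum_congr rfl (fun y _ => by rw [hM, blk_sA_sA])
  rw [Matrix.mul_assoc, Matrix.mul_apply, Fin.sum_univ_succAbove _ p]
  simp only [transpose_apply, blk_p_sA, zero_mul, zero_add]
  rw [Matrix.mul_assoc, Matrix.mul_apply]
  exact Finset.sum_congr rfl (fun x _ => by rw [blk_sA_sA, hMb x, transpose_apply])

lemma card_filter_lt (K j : ℕ) (hj : j ≤ K) :
    (univ.filter (fun x : Fin K => (x : ℕ) < j)).card = j := by
  have he : univ.filter (fun x : Fin K => (x : ℕ) < j)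
      = (Finset.range j).attachFin (fun m hm => lt_of_lt_of_le (Finset.mem_range.mp hm) hj) := by
    ext x
    simp [Finset.mem_attachFin]
  rw [he, Finset.card_attachFin, Finset.card_range]


lemma Lsucc (m : ℕ) (f : Fin (m+1) → ℝ) (j : ℕ) :
    ∑ i ∈ univ.filter (fun i : Fin (m+1) => (i : ℕ) < j+1), f i
      = f 0 + ∑ i ∈ univ.filter (fun i : Fin m => (i : ℕ) < j), f i.succ := by
  rw [Finset.sum_filter, Finset.sum_filter, Fin.sum_univ_succ]
  simp [Nat.succ_lt_succ_iff]

lemma LsA_le (m : ℕ) (f : Fin (m+1) → ℝ) (p : Fin (m+1)) (j : ℕ) (hj : j ≤ (p : ℕ)) :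
    ∑ i ∈ univ.filter (fun i : Fin m => (i : ℕ) < j), f (p.succAbove i)
      = ∑ x ∈ univ.filter (fun x : Fin (m+1) => (x : ℕ) < j), f x := by
  rw [Finset.sum_filter, Finset.sum_filter, Fin.sum_univ_succAbove _ p]
  have hp : ¬ ((p : ℕ) < j) := not_lt.mpr hj
  rw [if_neg hp, zero_add]
  apply Finset.sum_congr rfl
  intro i _
  have : ((p.succAbove i : Fin (m+1)) : ℕ) < j ↔ (i : ℕ) < j := by
    rcases lt_or_ge (i.castSucc) p with h | h
    · rw [Fin.succAbove_of_castSucc_lt _ _ h]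
      simp
    · rw [Fin.succAbove_of_le_castSucc _ _ h]
      have hi : (p:ℕ) ≤ (i:ℕ) := by simpa [Fin.le_def] using h
      simp only [Fin.val_succ]
      constructor <;> intro hh <;> omega
  simp [this]

lemma LsA_gt (m : ℕ) (f : Fin (m+1) → ℝ) (p : Fin (m+1)) (j : ℕ) (hj : (p : ℕ) < j) :
    ∑ i ∈ univ.filter (fun i : Fin m => (i : ℕ) < j), f (p.succAbove i)
      = ∑ x ∈ univ.filter (fun x : Fin (m+1) => (x : ℕ) < j+1), f x - f p := by
  rw [Finset.sum_filter, Finset.sum_filter, Fin.sum_univ_succAbove _ p]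
  have hp : ((p : ℕ) < j+1) := by omega
  rw [if_pos hp]
  rw [add_comm, add_sub_cancel_right]
  apply Finset.sum_congr rfl
  intro i _
  have : ((p.succAbove i : Fin (m+1)) : ℕ) < j + 1 ↔ (i : ℕ) < j := by
    rcases lt_or_ge (i.castSucc) p with h | h
    · rw [Fin.succAbove_of_castSucc_lt _ _ h]
      have hi : (i:ℕ) < (p:ℕ) := by simpa [Fin.lt_def] using h
      simp only [Fin.coe_castSucc]
      constructor <;> intro hh <;> omega
    · rw [Fin.succAbove_of_le_castSucc _ _ h]
      simp only [Fin.val_succ]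
      omega
  simp [this]


lemma top_sum (K : ℕ) (d : Fin K → ℝ) (hd : Antitone d) (hdn : ∀ i, 0 ≤ d i)
    (s : Finset (Fin K)) (j : ℕ) (hs : s.card ≤ j) :
    ∑ x ∈ s, d x ≤ ∑ x ∈ univ.filter (fun x : Fin K => (x : ℕ) < j), d x := by
  set Ij := univ.filter (fun x : Fin K => (x : ℕ) < j) with hIj
  rcases le_or_gt K j with hKj | hjK
  · have : Ij = univ := by
      ext x; simp [hIj]; omega
    rw [this]
    exact Finset.sum_le_sum_of_subset_of_nonneg (subset_univ s) (fun i _ _ => hdn i)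
  · -- j < K
    have hcardIj : Ij.card = j := by
      have : Ij = Finset.Iio (⟨j, hjK⟩ : Fin K) := by
        ext x; simp [hIj, Fin.lt_def]
      rw [this]
      simp
    have hsplit_s : ∑ x ∈ s ∩ Ij, d x + ∑ x ∈ s \ Ij, d x = ∑ x ∈ s, d x :=
      Finset.sum_inter_add_sum_sdiff s Ij d
    have hsplit_I : ∑ x ∈ Ij ∩ s, d x + ∑ x ∈ Ij \ s, d x = ∑ x ∈ Ij, d x :=
      Finset.sum_inter_add_sum_sdiff Ij s d
    have hAB : ∑ x ∈ s \ Ij, d x ≤ ∑ x ∈ Ij \ s, d x := by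
      set A := s \ Ij with hA
      set B := Ij \ s with hB
      rcases A.eq_empty_or_nonempty with hAe | hAne
      · rw [hAe, Finset.sum_empty]
        exact Finset.sum_nonneg (fun i _ => hdn i)
      · have hcardA : A.card ≤ B.card := by
          have h1 : A.card = s.card - (s ∩ Ij).card := by
            rw [hA, Finset.card_sdiff_add_card_inter s Ij |>.symm] <;> omega
          have h2 : B.card = Ij.card - (Ij ∩ s).card := by
            rw [hB, Finset.card_sdiff_add_card_inter Ij s |>.symm] <;> omega
          have h3 : (s ∩ Ij).card = (Ij ∩ s).card := by rw [Finset.inter_comm]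
          have h4 : (s ∩ Ij).card ≤ s.card := Finset.card_le_card (Finset.inter_subset_left)
          omega
        obtain ⟨B', hB'sub, hB'card⟩ := Finset.exists_subset_card_eq hcardA
        have hB'ne : B'.Nonempty := by
          rw [← Finset.card_pos, hB'card, Finset.card_pos]; exact hAne
        set v := B'.inf' hB'ne d with hv
        obtain ⟨b₀, hb₀, hvb₀⟩ := Finset.exists_mem_eq_inf' hB'ne d
        have hav : ∀ a ∈ A, d a ≤ v := by
          intro a ha
          have haj : j ≤ (a : ℕ) := by
            have := (Finset.mem_sdiff.mp ha).2
            simp [hIj] at this; omega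
          have hbj : (b₀ : ℕ) < j := by
            have := (Finset.mem_sdiff.mp (hB'sub hb₀)).1
            simp [hIj] at this; omega
          rw [hv, hvb₀]
          exact hd (by omega : b₀ ≤ a)
        calc ∑ x ∈ A, d x ≤ A.card • v := Finset.sum_le_card_nsmul A d v hav
          _ = B'.card • v := by rw [hB'card]
          _ ≤ ∑ x ∈ B', d x := Finset.card_nsmul_le_sum B' d v (fun b hb => Finset.inf'_le d hb)
          _ ≤ ∑ x ∈ B, d x :=
            Finset.sum_le_sum_of_subset_of_nonneg hB'sub (fun i _ _ => hdn i)
    calc ∑ x ∈ s, d x = ∑ x ∈ s ∩ Ij, d x + ∑ x ∈ s \ Ij, d x := hsplit_s.symm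
      _ ≤ ∑ x ∈ Ij ∩ s, d x + ∑ x ∈ Ij \ s, d x := by
          rw [Finset.inter_comm]; exact add_le_add le_rfl hAB
      _ = ∑ x ∈ Ij, d x := hsplit_I


/-- permutation matrix of `e` : column `y` has a 1 in row `e y`. -/
def permM {K : ℕ} (e : Equiv.Perm (Fin K)) : Matrix (Fin K) (Fin K) ℝ :=
  fun x y => if x = e y then 1 else 0

lemma permM_orth {K : ℕ} (e : Equiv.Perm (Fin K)) : (permM e)ᵀ * permM e = 1 := by
  ext i j
  rw [Matrix.mul_apply]
  simp only [transpose_apply, permM, ite_mul, one_mul, zero_mul, Matrix.one_apply]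
  rw [Finset.sum_ite_eq' univ (e i)]
  simp [EmbeddingLike.apply_eq_iff_eq, eq_comm]

lemma permM_conj {K : ℕ} (e : Equiv.Perm (Fin K)) (A : Matrix (Fin K) (Fin K) ℝ)
    (i j : Fin K) : ((permM e)ᵀ * A * permM e) i j = A (e i) (e j) := by
  rw [Matrix.mul_apply]
  simp only [permM, mul_ite, mul_one, mul_zero]
  rw [Finset.sum_ite_eq' univ (e j)]
  simp only [mem_univ, if_true, Matrix.mul_apply, transpose_apply]
  simp only [permM, ite_mul, one_mul, zero_mul]
  rw [Finset.sum_ite_eq' univ (e i)]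
  simp

lemma SH : ∀ (K : ℕ) (c d : Fin K → ℝ), Antitone c → Antitone d →
    (∀ j : ℕ, ∑ i ∈ univ.filter (fun i : Fin K => (i : ℕ) < j), c i ≤
      ∑ i ∈ univ.filter (fun i : Fin K => (i : ℕ) < j), d i) →
    (∑ i, c i = ∑ i, d i) →
    ∃ X : Matrix (Fin K) (Fin K) ℝ, Xᵀ * X = 1 ∧
      ∀ i, (Xᵀ * Matrix.diagonal d * X) i i = c i := by
  intro K
  induction K with
  | zero =>
    intro c d _ _ _ _
    exact ⟨1, by simp, fun i => i.elim0⟩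
  | succ m IH =>
    intro c d hc hd hmaj hsum
    by_cases hA : ∀ i, c 0 ≤ d i
    · have hle : ∀ i ∈ (univ : Finset (Fin (m+1))), c i ≤ d i :=
        fun i _ => le_trans (hc (Fin.zero_le i)) (hA i)
      have heq : ∀ i ∈ (univ : Finset (Fin (m+1))), c i = d i :=
        (Finset.sum_eq_sum_iff_of_le hle).mp hsum
      refine ⟨1, by simp, fun i => ?_⟩
      simp [heq i (mem_univ i)]
    · push_neg at hA
      have hFne : (univ.filter (fun i : Fin (m+1) => d i < c 0)).Nonempty := by
        obtain ⟨i, hi⟩ := hA; exact ⟨i, by simp [hi]⟩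
      set t := (univ.filter (fun i : Fin (m+1) => d i < c 0)).min' hFne with ht
      have htF : d t < c 0 := by
        have := Finset.min'_mem _ hFne
        rw [← ht] at this
        simpa using this
      have hmin : ∀ x : Fin (m+1), d x < c 0 → t ≤ x :=
        fun x hx => Finset.min'_le _ x (by simpa using hx)
      have hc0d0 : c 0 ≤ d 0 := by
        have h := hmaj 1
        have e1 : (univ.filter (fun i : Fin (m+1) => (i : ℕ) < 1)) = {0} := by
          ext x; rw [Finset.mem_filter, Finset.mem_singleton, Fin.ext_iff, Fin.val_zero]; simp only [mem_univ, true_and]; omega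
        rw [e1] at h; simpa using h
      have ht0 : (t : ℕ) ≠ 0 := by
        intro h
        have h0 : t = 0 := Fin.ext h
        rw [h0] at htF; linarith
      have htm : (t : ℕ) ≤ m := Fin.is_le t
      set p' : Fin m := ⟨(t : ℕ) - 1, by omega⟩ with hp'
      set p : Fin (m+1) := p'.castSucc with hp
      have hpval : (p : ℕ) = (t : ℕ) - 1 := rfl
      have hpt : t = p'.succ := by
        apply Fin.ext; simp [Fin.val_succ, hp']; omega
      have hpne : p ≠ t := by
        rw [hpt]; exact Fin.castSucc_lt_succ.ne
      have hba : d t < c 0 := htF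
      have hc0a : c 0 ≤ d p := by
        by_contra h
        push_neg at h
        have h2 := hmin p h
        have h3 : (t : ℕ) ≤ (p : ℕ) := h2
        omega
      obtain ⟨co, s, h1, h2⟩ : ∃ co s : ℝ, co^2 + s^2 = 1 ∧ d p * co^2 + d t * s^2 = c 0 := by
        have hab : d t < d p := lt_of_lt_of_le hba hc0a
        have habp : (0:ℝ) < d p - d t := by linarith
        refine ⟨Real.sqrt ((c 0 - d t)/(d p - d t)), Real.sqrt ((d p - c 0)/(d p - d t)), ?_, ?_⟩
        · rw [Real.sq_sqrt (div_nonneg (by linarith) habp.le), Real.sq_sqrt (div_nonneg (by linarith) habp.le)]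
          field_simp
          ring
        · rw [Real.sq_sqrt (div_nonneg (by linarith) habp.le), Real.sq_sqrt (div_nonneg (by linarith) habp.le)]
          field_simp
          ring
      have h3 : d p * s^2 + d t * co^2 = d p + d t - c 0 := by linear_combination (d p + d t) * h1 - h2
      set v : ℝ := d p + d t - c 0 with hv
      set f : Fin (m+1) → ℝ := Function.update d t v with hf
      set c' : Fin m → ℝ := fun i => c i.succ with hc'
      set d' : Fin m → ℝ := fun i => f (p.succAbove i) with hd'
      have hp'v : (p' : ℕ) = (t : ℕ) - 1 := rfl
      have htv : (t : ℕ) = (p' : ℕ) + 1 := by omega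
      have hd'app : ∀ i : Fin m, d' i = f (p.succAbove i) := fun i => rfl
      have hc'app : ∀ i : Fin m, c' i = c i.succ := fun i => rfl
      have hfval : ∀ x, x ≠ t → f x = d x := fun x hx => Function.update_of_ne hx v d
      have hft : f t = v := Function.update_self t v d
      have hfp : f p = d p := Function.update_of_ne hpne v d
      have hsAp' : p.succAbove p' = t := by
        rw [hpt, hp]
        exact Fin.succAbove_of_le_castSucc _ _ (le_refl _)
      have hsAt : ∀ i : Fin m, p.succAbove i = t ↔ i = p' :=
        fun i => ⟨fun h => Fin.succAbove_right_injective (h.trans hsAp'.symm),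
          fun h => h ▸ hsAp'⟩
      have hcs : ∀ i : Fin m, i.castSucc ≤ p.succAbove i ∧ p.succAbove i ≤ i.succ := by
        intro i
        rcases lt_or_ge i.castSucc p with h | h
        · rw [Fin.succAbove_of_castSucc_lt _ _ h]
          exact ⟨le_refl _, Fin.castSucc_le_succ i⟩
        · rw [Fin.succAbove_of_le_castSucc _ _ h]
          exact ⟨Fin.castSucc_le_succ i, le_refl _⟩
      have hA1 : ∀ i : Fin m, d' i ≤ d i.castSucc := by
        intro i
        by_cases hi : i = p'
        · rw [hi, hd'app, hsAp', hft, hv, ← hp]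
          linarith
        · rw [hd'app, hfval _ (fun h => hi ((hsAt i).mp h))]
          exact hd (hcs i).1
      have hA2 : ∀ i : Fin m, d i.succ ≤ d' i := by
        intro i
        by_cases hi : i = p'
        · rw [hi, hd'app, hsAp', hft, hv, ← hpt]
          linarith
        · rw [hd'app, hfval _ (fun h => hi ((hsAt i).mp h))]
          exact hd (hcs i).2
      have hc'anti : Antitone c' := by
        intro i j hij
        exact hc (Fin.succ_le_succ_iff.mpr hij)
      have hd'anti : Antitone d' := by
        intro i j hij
        rcases eq_or_lt_of_le hij with h | h
        · rw [h]
        · have hsc : i.succ ≤ j.castSucc := by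
            rw [Fin.le_def]
            simp only [Fin.val_succ, Fin.coe_castSucc]
            exact Fin.lt_def.mp h
          calc d' j ≤ d j.castSucc := hA1 j
            _ ≤ d i.succ := hd hsc
            _ ≤ d' i := hA2 i
      have hsum' : ∑ i, c' i = ∑ i, d' i := by
        have e1 : ∑ i, c i = c 0 + ∑ i, c' i := Fin.sum_univ_succ c
        have e2 : ∑ x, f x = f p + ∑ i, d' i := Fin.sum_univ_succAbove f p
        have e3 : ∑ x, f x = v + ∑ x ∈ univ \ {t}, d x := by
          rw [hf]; exact Finset.sum_update_of_mem (mem_univ t) d v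
        have e4 : ∑ x, d x = ∑ x ∈ univ \ {t}, d x + d t :=
          Finset.sum_eq_sum_sdiff_singleton_add (mem_univ t) d
        rw [hfp] at e2
        rw [hv] at e3
        linarith [e1, e2, e3, e4, hsum]
      have hmaj' : ∀ j : ℕ, ∑ i ∈ univ.filter (fun i : Fin m => (i : ℕ) < j), c' i ≤
          ∑ i ∈ univ.filter (fun i : Fin m => (i : ℕ) < j), d' i := by
        intro j
        rcases le_or_gt j (p' : ℕ) with hj | hj
        · -- j ≤ p'
          have hSd : ∑ i ∈ univ.filter (fun i : Fin m => (i : ℕ) < j), d' i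
              = ∑ x ∈ univ.filter (fun x : Fin (m+1) => (x : ℕ) < j), d x := by
            calc ∑ i ∈ univ.filter (fun i : Fin m => (i : ℕ) < j), d' i
                = ∑ i ∈ univ.filter (fun i : Fin m => (i : ℕ) < j), f (p.succAbove i) :=
                  Finset.sum_congr rfl (fun i _ => hd'app i)
              _ = ∑ x ∈ univ.filter (fun x : Fin (m+1) => (x : ℕ) < j), f x :=
                  LsA_le m f p j (by omega)
              _ = ∑ x ∈ univ.filter (fun x : Fin (m+1) => (x : ℕ) < j), d x := by
                  apply Finset.sum_congr rfl
                  intro x hx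
                  simp only [Finset.mem_filter, mem_univ, true_and] at hx
                  have hxt : x ≠ t := fun h => by rw [h] at hx; omega
                  exact hfval x hxt
          rw [hSd]
          have hcard1 : (univ.filter (fun i : Fin m => (i : ℕ) < j)).card = j :=
            card_filter_lt m j (by omega)
          have hcard2 : (univ.filter (fun x : Fin (m+1) => (x : ℕ) < j)).card = j :=
            card_filter_lt (m+1) j (by omega)
          have hb1 := Finset.sum_le_card_nsmul (univ.filter (fun i : Fin m => (i : ℕ) < j))
            c' (c 0) (fun x _ => hc (Fin.zero_le _))
          have hb2 := Finset.card_nsmul_le_sum (univ.filter (fun x : Fin (m+1) => (x : ℕ) < j))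
            d (d p) (fun x hx => by
              simp only [Finset.mem_filter, mem_univ, true_and] at hx
              apply hd
              rw [Fin.le_def]
              omega)
          rw [hcard1, nsmul_eq_mul] at hb1
          rw [hcard2, nsmul_eq_mul] at hb2
          have hmid : (j : ℝ) * c 0 ≤ (j : ℝ) * d p :=
            mul_le_mul_of_nonneg_left hc0a (Nat.cast_nonneg j)
          linarith [hb1, hb2, hmid]
        · -- p' < j
          have htmem : t ∈ univ.filter (fun x : Fin (m+1) => (x : ℕ) < j+1) := by
            simp only [Finset.mem_filter, mem_univ, true_and]
            omega
          have e3 : ∑ x ∈ univ.filter (fun x : Fin (m+1) => (x : ℕ) < j+1), f x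
              = v + ∑ x ∈ (univ.filter (fun x : Fin (m+1) => (x : ℕ) < j+1)) \ {t}, d x := by
            rw [hf]; exact Finset.sum_update_of_mem htmem d v
          have e4 : ∑ x ∈ univ.filter (fun x : Fin (m+1) => (x : ℕ) < j+1), d x
              = ∑ x ∈ (univ.filter (fun x : Fin (m+1) => (x : ℕ) < j+1)) \ {t}, d x + d t :=
            Finset.sum_eq_sum_sdiff_singleton_add htmem d
          have hSd : ∑ i ∈ univ.filter (fun i : Fin m => (i : ℕ) < j), d' i
              = ∑ x ∈ univ.filter (fun x : Fin (m+1) => (x : ℕ) < j+1), d x - c 0 := by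
            calc ∑ i ∈ univ.filter (fun i : Fin m => (i : ℕ) < j), d' i
                = ∑ i ∈ univ.filter (fun i : Fin m => (i : ℕ) < j), f (p.succAbove i) :=
                  Finset.sum_congr rfl (fun i _ => hd'app i)
              _ = ∑ x ∈ univ.filter (fun x : Fin (m+1) => (x : ℕ) < j+1), f x - f p :=
                  LsA_gt m f p j (by omega)
              _ = ∑ x ∈ univ.filter (fun x : Fin (m+1) => (x : ℕ) < j+1), d x - c 0 := by
                  rw [hfp, e3, hv]
                  linarith [e4]
          have hSc : ∑ i ∈ univ.filter (fun i : Fin m => (i : ℕ) < j), c' i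
              = ∑ x ∈ univ.filter (fun x : Fin (m+1) => (x : ℕ) < j+1), c x - c 0 := by
            have := Lsucc m c j
            have e5 : ∑ i ∈ univ.filter (fun i : Fin m => (i : ℕ) < j), c' i
                = ∑ i ∈ univ.filter (fun i : Fin m => (i : ℕ) < j), c i.succ :=
              Finset.sum_congr rfl (fun i _ => hc'app i)
            rw [e5]
            linarith [this]
          rw [hSd, hSc]
          linarith [hmaj (j+1)]
      obtain ⟨Y, hYo, hYd⟩ := IH c' d' hc'anti hd'anti hmaj' hsum'
      set R := rotM p t co s with hR
      set M := Rᵀ * Matrix.diagonal d * R with hM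
      have hMpp : M p p = c 0 := by
        rw [hM, hR, rot_conj p t hpne]
        simp only [rotM, if_pos rfl, if_neg hpne, if_neg (Ne.symm hpne), true_or, if_true]
        linear_combination h2
      have hMsA : ∀ i j : Fin m, M (p.succAbove i) (p.succAbove j)
          = Matrix.diagonal d' i j := by
        intro i j
        rw [hM, hR, rot_conj p t hpne]
        have hip : p.succAbove i ≠ p := Fin.succAbove_ne p i
        have hjp : p.succAbove j ≠ p := Fin.succAbove_ne p j
        by_cases hij : i = j
        · subst hij
          rw [Matrix.diagonal_apply_eq]
          by_cases hit : p.succAbove i = t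
          · rw [show d' i = v from by rw [hd'app, hit, hft]]
            simp only [rotM, if_neg hip, hit, if_pos rfl, if_neg hpne,
              if_neg (Ne.symm hpne), or_true, if_true, hv]
            linear_combination h3
          · rw [show d' i = d (p.succAbove i) from by rw [hd'app, hfval _ hit]]
            have hor : ¬(p.succAbove i = p ∨ p.succAbove i = t) := by
              rintro (h | h)
              exacts [hip h, hit h]
            simp only [rotM, if_neg hip, if_neg hit, if_pos rfl, if_neg hor]
            simp
        · have hne : p.succAbove i ≠ p.succAbove j :=
            fun h => hij (Fin.succAbove_right_injective h)
          rw [Matrix.diagonal_apply_ne _ hij, if_neg hne]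
          by_cases hit : p.succAbove i = t <;> by_cases hjt : p.succAbove j = t
          · exact absurd (hit.trans hjt.symm) hne
          · simp only [rotM, if_neg hip, if_neg hjp, hit, if_pos rfl, if_neg hjt]
            simp
          · simp only [rotM, if_neg hip, if_neg hjp, hjt, if_pos rfl, if_neg hit]
            simp
          · simp only [rotM, if_neg hip, if_neg hjp, if_neg hit, if_neg hjt]
            simp
      refine ⟨R * blk p Y * permM p.cycleRange.symm, ?_, ?_⟩
      · rw [Matrix.transpose_mul, Matrix.transpose_mul]
        simp only [Matrix.mul_assoc]
        rw [← Matrix.mul_assoc Rᵀ R, hR, rot_orth p t hpne co s h1, Matrix.one_mul]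
        rw [← Matrix.mul_assoc (blk p Y)ᵀ (blk p Y), blk_orth p Y hYo, Matrix.one_mul]
        exact permM_orth _
      · intro i
        have hform : (R * blk p Y * permM p.cycleRange.symm)ᵀ * Matrix.diagonal d
            * (R * blk p Y * permM p.cycleRange.symm)
            = (permM p.cycleRange.symm)ᵀ * ((blk p Y)ᵀ * M * blk p Y)
              * permM p.cycleRange.symm := by
          rw [hM]
          simp only [Matrix.transpose_mul, Matrix.mul_assoc]
        rw [hform, permM_conj]
        cases i using Fin.cases with
        | zero =>
          rw [Fin.cycleRange_symm_zero, blk_conj_p, hMpp]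
        | succ i₀ =>
          rw [Fin.cycleRange_symm_succ, blk_conj_sA p Y M (Matrix.diagonal d') hMsA, hYd i₀]

/-- Schur–Horn for the diagonal matrix `Λ = diag(λ_1,…,λ_n,0,…,0)`: if the padded
sequence `(λ_1,…,λ_n,0,…,0)` majorizes `(c_1,…,c_K)`, there is an orthogonal `X`
with the diagonal of `Xᵀ Λ X` equal to `c`. -/
theorem stmt19 (n K : ℕ) (hK : n ≤ K)
    (c : Fin K → ℝ) (hcpos : ∀ i, 0 < c i) (hcmono : Antitone c)
    (lam : Fin n → ℝ) (hlampos : ∀ i, 0 < lam i)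
    (hmaj₁ : ∀ j : ℕ, j < n →
      ∑ i ∈ univ.filter (fun i : Fin K => (i : ℕ) < j), c i ≤
        ∑ i ∈ univ.filter (fun i : Fin n => (i : ℕ) < j), lam i)
    (hmaj₂ : ∑ i, c i = ∑ i, lam i) :
    let Λ : Matrix (Fin K) (Fin K) ℝ :=
      Matrix.diagonal (fun i : Fin K => if h : (i : ℕ) < n then lam ⟨i, h⟩ else 0)
    ∃ X : Matrix (Fin K) (Fin K) ℝ,
      Xᵀ * X = 1 ∧ ∀ i : Fin K, (Xᵀ * Λ * X) i i = c i := by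
  intro Λ
  set F : ℕ → ℝ := fun k => if h : k < n then lam ⟨k, h⟩ else 0 with hF
  set padded : Fin K → ℝ := fun i => if h : (i : ℕ) < n then lam ⟨i, h⟩ else 0 with hpad
  have hpadF : ∀ x : Fin K, padded x = F (x : ℕ) := fun x => rfl
  have hlamF : ∀ i : Fin n, lam i = F (i : ℕ) := by
    intro i
    rw [hF]
    simp only [i.isLt, dif_pos]
  have hpadnn : ∀ x : Fin K, 0 ≤ padded x := by
    intro x
    rw [hpad]
    by_cases h : (x : ℕ) < n
    · simp only [dif_pos h]; exact (hlampos _).le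
    · simp only [dif_neg h]; exact le_refl 0
  set σ : Equiv.Perm (Fin K) := Tuple.sort (fun i => -padded i) with hσ
  set d : Fin K → ℝ := fun i => padded (σ i) with hdd
  have hd_anti : Antitone d := by
    have hm : Monotone ((fun i => -padded i) ∘ σ) := Tuple.monotone_sort _
    intro i j hij
    have := hm hij
    simp only [Function.comp_apply] at this
    rw [hdd]
    simp only
    linarith
  have hdnn : ∀ i, 0 ≤ d i := fun i => hpadnn _
  -- sums over range
  have hrange : ∀ jn : ℕ, jn ≤ n →
      ∑ x ∈ univ.filter (fun x : Fin K => (x : ℕ) < jn), padded x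
        = ∑ i ∈ univ.filter (fun i : Fin n => (i : ℕ) < jn), lam i := by
    intro jn hjn
    have h1 : ∑ x ∈ univ.filter (fun x : Fin K => (x : ℕ) < jn), padded x
        = ∑ k ∈ Finset.range jn, F k := by
      rw [Finset.sum_filter]
      rw [Finset.sum_congr rfl (fun x _ => by rw [hpadF x])]
      rw [Fin.sum_univ_eq_sum_range (fun k => if k < jn then F k else 0) K]
      rw [← Finset.sum_filter]
      congr 1
      ext k
      simp only [Finset.mem_filter, Finset.mem_range]
      omega
    have h2 : ∑ i ∈ univ.filter (fun i : Fin n => (i : ℕ) < jn), lam i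
        = ∑ k ∈ Finset.range jn, F k := by
      rw [Finset.sum_filter]
      rw [Finset.sum_congr rfl (fun x _ => by rw [hlamF x])]
      rw [Fin.sum_univ_eq_sum_range (fun k => if k < jn then F k else 0) n]
      rw [← Finset.sum_filter]
      congr 1
      ext k
      simp only [Finset.mem_filter, Finset.mem_range]
      omega
    rw [h1, h2]
  have hlamuniv : ∑ i, lam i = ∑ i ∈ univ.filter (fun i : Fin n => (i : ℕ) < n), lam i := by
    congr 1
    symm
    apply Finset.filter_true_of_mem
    intro i _
    exact i.isLt
  have hsum_pd : ∑ x, d x = ∑ x, padded x := by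
    rw [hdd]
    exact Equiv.sum_comp σ padded
  have hsum_pad : ∑ x, padded x = ∑ i, lam i := by
    rw [hlamuniv, ← hrange n (le_refl n)]
    symm
    apply Finset.sum_subset (Finset.filter_subset _ _)
    intro x _ hx
    simp only [Finset.mem_filter, mem_univ, true_and, not_lt] at hx
    rw [hpad]
    simp only
    exact dif_neg (by omega)
  have hsum_cd : ∑ i, c i = ∑ i, d i := by rw [hmaj₂, hsum_pd, hsum_pad]
  -- conversion of partial lam-sums to subsets of d
  have hconv : ∀ jn : ℕ, jn ≤ n →
      ∑ i ∈ univ.filter (fun i : Fin n => (i : ℕ) < jn), lam i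
        = ∑ x ∈ (univ.filter (fun x : Fin K => (x : ℕ) < jn)).image σ.symm, d x := by
    intro jn hjn
    rw [← hrange jn hjn]
    rw [Finset.sum_image (fun x _ y _ h => σ.symm.injective h)]
    apply Finset.sum_congr rfl
    intro x _
    rw [hdd]
    simp only [Equiv.apply_symm_apply]
  have hcard_img : ∀ jn : ℕ, jn ≤ n →
      ((univ.filter (fun x : Fin K => (x : ℕ) < jn)).image σ.symm).card = jn := by
    intro jn hjn
    rw [Finset.card_image_of_injective _ σ.symm.injective]
    exact card_filter_lt K jn (le_trans hjn hK)
  have hmaj_d : ∀ j : ℕ, ∑ i ∈ univ.filter (fun i : Fin K => (i : ℕ) < j), c i ≤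
      ∑ i ∈ univ.filter (fun i : Fin K => (i : ℕ) < j), d i := by
    intro j
    rcases lt_or_ge j n with hj | hj
    · calc ∑ i ∈ univ.filter (fun i : Fin K => (i : ℕ) < j), c i
          ≤ ∑ i ∈ univ.filter (fun i : Fin n => (i : ℕ) < j), lam i := hmaj₁ j hj
        _ = ∑ x ∈ (univ.filter (fun x : Fin K => (x : ℕ) < j)).image σ.symm, d x :=
            hconv j hj.le
        _ ≤ ∑ i ∈ univ.filter (fun i : Fin K => (i : ℕ) < j), d i :=
            top_sum K d hd_anti hdnn _ j (le_of_eq (hcard_img j hj.le))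
    · calc ∑ i ∈ univ.filter (fun i : Fin K => (i : ℕ) < j), c i
          ≤ ∑ i, c i := Finset.sum_le_sum_of_subset_of_nonneg
            (Finset.filter_subset _ _) (fun i _ _ => (hcpos i).le)
        _ = ∑ i, lam i := hmaj₂
        _ = ∑ i ∈ univ.filter (fun i : Fin n => (i : ℕ) < n), lam i := hlamuniv
        _ = ∑ x ∈ (univ.filter (fun x : Fin K => (x : ℕ) < n)).image σ.symm, d x :=
            hconv n (le_refl n)
        _ ≤ ∑ i ∈ univ.filter (fun i : Fin K => (i : ℕ) < j), d i :=
            top_sum K d hd_anti hdnn _ j (by rw [hcard_img n (le_refl n)]; exact hj)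
  obtain ⟨X₁, hX₁o, hX₁d⟩ := SH K c d hcmono hd_anti hmaj_d hsum_cd
  have hQconj : (permM σ)ᵀ * Λ * permM σ = Matrix.diagonal d := by
    ext u w
    rw [permM_conj]
    show Matrix.diagonal padded (σ u) (σ w) = Matrix.diagonal d u w
    rw [Matrix.diagonal_apply, Matrix.diagonal_apply]
    by_cases h : u = w
    · rw [h]
      simp [hdd]
    · rw [if_neg h, if_neg (fun hh => h (σ.injective hh))]
  refine ⟨permM σ * X₁, ?_, ?_⟩
  · rw [Matrix.transpose_mul]
    calc X₁ᵀ * (permM σ)ᵀ * (permM σ * X₁)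
        = X₁ᵀ * (((permM σ)ᵀ * permM σ) * X₁) := by
          simp only [Matrix.mul_assoc]
      _ = X₁ᵀ * X₁ := by rw [permM_orth σ, Matrix.one_mul]
      _ = 1 := hX₁o
  · intro i
    have hform : (permM σ * X₁)ᵀ * Λ * (permM σ * X₁)
        = X₁ᵀ * Matrix.diagonal d * X₁ := by
      rw [← hQconj]
      rw [Matrix.transpose_mul]
      simp only [Matrix.mul_assoc]
    rw [hform]
    exact hX₁d i
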